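/- Let d ≥ 1 and 0 ≤ r ≤ d be integers, and define polynomials p_0(λ) = λ, p_1(λ) = λ² − d, and p_r(λ) = λ·p_{r−1}(λ) − r(d − r + 1)·p_{r−2}(λ) for r ≥ 2. Then the principal (largest) eigenvalue of the adjacency matrix of the Hamming ball B_{d,r} is a root of p_r. -/

import Mathlib

/-- The `d`-dimensional hypercube graph `Q_d` on vertex set `{0,1}^d`:
two vertices are adjacent iff they differ in exactly one coordinate. -/
def hypercubeGraph (d : ℕ) : SimpleGraph (Fin d → Fin 2) where
  Adj u v := hammingDist u v = 1
  symm := by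
    constructor
    intro u v h
    rwa [hammingDist_comm]
  loopless := by
    constructor
    intro u h
    simp [hammingDist_self] at h

noncomputable instance (d : ℕ) : DecidableRel (hypercubeGraph d).Adj :=
  Classical.decRel _

/-- The Hamming ball `B_{d,r}`: the subgraph of `Q_d` induced by the vertices having
at most `r` coordinates equal to `1`. -/
def hammingBall (d r : ℕ) : SimpleGraph {v : Fin d → Fin 2 // hammingNorm v ≤ r} :=
  SimpleGraph.induce {v : Fin d → Fin 2 | hammingNorm v ≤ r} (hypercubeGraph d)

noncomputable instance (d r : ℕ) : DecidableRel (hammingBall d r).Adj :=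
  Classical.decRel _

open Finset Matrix

/-- The polynomials `p_r`: `p_0 = λ`, `p_1 = λ² - d`, and
`p_r = λ·p_{r-1} - r(d - r + 1)·p_{r-2}` for `r ≥ 2`. -/
noncomputable def ballPoly (d : ℕ) : ℕ → Polynomial ℝ
  | 0 => Polynomial.X
  | 1 => Polynomial.X ^ 2 - Polynomial.C (d : ℝ)
  | (m + 2) =>
      Polynomial.X * ballPoly d (m + 1) -
        Polynomial.C (((m : ℝ) + 2) * ((d : ℝ) - ((m : ℝ) + 2) + 1)) * ballPoly d m


lemma exists_nonneg_principal_eigenvector {n : Type*} [Fintype n] [DecidableEq n] [Nonempty n]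
    (A : Matrix n n ℝ) (hA : A.IsHermitian) (h0 : ∀ i j, 0 ≤ A i j) :
    ∃ w : n → ℝ, w ≠ 0 ∧ (∀ i, 0 ≤ w i) ∧ A *ᵥ w = sSup (spectrum ℝ A) • w := by
  set μ := sSup (spectrum ℝ A) with hμdef
  set eig := hA.eigenvalues with heig
  set U := (hA.eigenvectorUnitary : Matrix n n ℝ) with hU
  have hUU : U * star U = 1 := mem_unitaryGroup_iff.mp hA.eigenvectorUnitary.2
  have hUU' : star U * U = 1 := mem_unitaryGroup_iff'.mp hA.eigenvectorUnitary.2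
  have hAeq : A = U * Matrix.diagonal eig * star U := hA.spectral_theorem
  -- spectrum facts
  have hsp : spectrum ℝ A = Set.range eig := hA.spectrum_real_eq_range_eigenvalues
  have hbdd : ∀ i, eig i ≤ μ := fun i => by
    rw [hμdef, hsp]; exact le_csSup (Set.finite_range eig).bddAbove ⟨i, rfl⟩
  obtain ⟨i₀, hi₀⟩ : ∃ i₀, eig i₀ = μ := by
    have : μ ∈ Set.range eig := by
      rw [hμdef, hsp]
      exact (Set.range_nonempty eig).csSup_mem (Set.finite_range eig)
    exact this
  -- basic mulVec facts
  have fact1 : ∀ y : n → ℝ, A *ᵥ y = U *ᵥ (fun i => eig i * (star U *ᵥ y) i) := by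
    intro y
    rw [hAeq, ← mulVec_mulVec, ← mulVec_mulVec,
      show diagonal eig *ᵥ (star U *ᵥ y) = fun i => eig i * (star U *ᵥ y) i from
        funext fun i => mulVec_diagonal _ _ _]
  have fact2 : ∀ (y t : n → ℝ), y ⬝ᵥ (U *ᵥ t) = (star U *ᵥ y) ⬝ᵥ t := by
    intro y t
    rw [dotProduct_mulVec]
    congr 1
    rw [Matrix.star_eq_conjTranspose, conjTranspose_eq_transpose_of_trivial, mulVec_transpose]
  have fact3 : ∀ y : n → ℝ, (star U *ᵥ y) ⬝ᵥ (star U *ᵥ y) = y ⬝ᵥ y := by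
    intro y
    rw [← fact2, mulVec_mulVec, hUU, one_mulVec]
  have quad : ∀ y : n → ℝ,
      y ⬝ᵥ (A *ᵥ y) = ∑ i, eig i * ((star U *ᵥ y) i * (star U *ᵥ y) i) := by
    intro y
    rw [fact1, fact2]
    simp [dotProduct, mul_comm, mul_assoc, mul_left_comm]
  have hbound : ∀ y : n → ℝ, y ⬝ᵥ (A *ᵥ y) ≤ μ * (y ⬝ᵥ y) := by
    intro y
    rw [quad, ← fact3 y, dotProduct, Finset.mul_sum]
    refine Finset.sum_le_sum fun i _ => ?_
    exact mul_le_mul_of_nonneg_right (hbdd i) (mul_self_nonneg _)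
  -- the eigenvector and its absolute value
  set w0 : n → ℝ := ⇑(hA.eigenvectorBasis i₀) with hw0def
  have hw0eig : A *ᵥ w0 = μ • w0 := by
    rw [hw0def, hA.mulVec_eigenvectorBasis, show hA.eigenvalues i₀ = μ from hi₀]
  have hw0ne : w0 ≠ 0 := by
    intro h
    have hz : hA.eigenvectorBasis i₀ = 0 := by
      ext j
      simpa [hw0def] using congrFun h j
    exact hA.eigenvectorBasis.toBasis.ne_zero i₀
      (by rw [congrFun hA.eigenvectorBasis.coe_toBasis i₀, hz])
  refine ⟨fun i => |w0 i|, ?_, fun i => abs_nonneg _, ?_⟩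
  · intro h
    apply hw0ne
    funext i
    have := congrFun h i
    simpa using abs_eq_zero.mp this
  · -- equality in the quadratic form
    set w : n → ℝ := fun i => |w0 i| with hwdef
    have hww : w ⬝ᵥ w = w0 ⬝ᵥ w0 := by
      simp [dotProduct, hwdef, abs_mul_abs_self]
    have hq0 : w0 ⬝ᵥ (A *ᵥ w0) = μ * (w0 ⬝ᵥ w0) := by
      rw [hw0eig, dotProduct_smul, smul_eq_mul]
    have hqle : w0 ⬝ᵥ (A *ᵥ w0) ≤ w ⬝ᵥ (A *ᵥ w) := by
      simp only [dotProduct, mulVec, Finset.mul_sum]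
      refine Finset.sum_le_sum fun i _ => Finset.sum_le_sum fun j _ => ?_
      have h1 : w0 i * (A i j * w0 j) = A i j * (w0 i * w0 j) := by ring
      have h2 : w i * (A i j * w j) = A i j * |w0 i * w0 j| := by
        rw [abs_mul]; ring
      rw [h1, h2]
      exact mul_le_mul_of_nonneg_left (le_abs_self _) (h0 i j)
    have heq : w ⬝ᵥ (A *ᵥ w) = μ * (w ⬝ᵥ w) := by
      refine le_antisymm (hbound w) ?_
      rw [hww, ← hq0]
      exact hqle
    -- deduce eigenvector property
    set z : n → ℝ := star U *ᵥ w with hz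
    have hzero : ∑ i, (μ - eig i) * (z i * z i) = 0 := by
      have h1 := quad w
      have h2 : μ * (w ⬝ᵥ w) = ∑ i, μ * (z i * z i) := by
        rw [← fact3 w, dotProduct, Finset.mul_sum]
      rw [heq] at h1
      rw [h2] at h1
      have : ∑ i, ((μ - eig i) * (z i * z i)) =
          ∑ i, (μ * (z i * z i)) - ∑ i, (eig i * (z i * z i)) := by
        rw [← Finset.sum_sub_distrib]
        exact Finset.sum_congr rfl fun i _ => by ring
      rw [this, ← h1, sub_self]
    have hterm : ∀ i, (μ - eig i) * (z i * z i) = 0 := by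
      have := (Finset.sum_eq_zero_iff_of_nonneg (fun i _ =>
        mul_nonneg (sub_nonneg.mpr (hbdd i)) (mul_self_nonneg (z i)))).mp hzero
      exact fun i => this i (Finset.mem_univ i)
    have hmul : ∀ i, eig i * z i = μ * z i := by
      intro i
      rcases mul_eq_zero.mp (hterm i) with h | h
      · rw [sub_eq_zero] at h; rw [← h]
      · rw [mul_self_eq_zero.mp h, mul_zero, mul_zero]
    calc A *ᵥ w = U *ᵥ (fun i => eig i * z i) := fact1 w
      _ = U *ᵥ (μ • z) := by
          rw [show (fun i => eig i * z i) = μ • z from funext fun i => by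
            rw [hmul i]; simp]
      _ = μ • (U *ᵥ z) := mulVec_smul _ _ _
      _ = μ • w := by rw [hz, mulVec_mulVec, hUU, one_mulVec]

variable {d : ℕ}

lemma fin2_eq_one_of_ne {a : Fin 2} (h : a ≠ 0) : a = 1 := by omega

lemma norm_update_one (u : Fin d → Fin 2) (j : Fin d) (hj : u j = 0) :
    hammingNorm (Function.update u j 1) = hammingNorm u + 1 := by
  unfold hammingNorm
  rw [show (filter (fun i => Function.update u j 1 i ≠ 0) univ)
      = insert j (filter (fun i => u i ≠ 0) univ) from ?_]
  · rw [card_insert_of_notMem (by simp [hj])]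
  · ext i
    rcases eq_or_ne i j with rfl | h
    · simp
    · simp [Function.update_of_ne h, h]

lemma norm_update_zero (u : Fin d → Fin 2) (j : Fin d) (hj : u j ≠ 0) :
    hammingNorm (Function.update u j 0) + 1 = hammingNorm u := by
  unfold hammingNorm
  rw [show (filter (fun i => Function.update u j 0 i ≠ 0) univ)
      = (filter (fun i => u i ≠ 0) univ).erase j from ?_]
  · rw [card_erase_add_one (by simp [hj])]
  · ext i
    rcases eq_or_ne i j with rfl | h
    · simp
    · simp [Function.update_of_ne h, h]

lemma dist_update (u : Fin d → Fin 2) (j : Fin d) (b : Fin 2) (hb : b ≠ u j) :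
    hammingDist (Function.update u j b) u = 1 := by
  unfold hammingDist
  rw [show (filter (fun i => Function.update u j b i ≠ u i) univ) = {j} from ?_]
  · exact card_singleton j
  · ext i
    rcases eq_or_ne i j with rfl | h
    · simp [hb]
    · simp [Function.update_of_ne h, h]

lemma exists_update_of_dist_one {x u : Fin d → Fin 2} (h : hammingDist x u = 1) :
    ∃ j, x j ≠ u j ∧ x = Function.update u j (x j) := by
  obtain ⟨j, hj⟩ := card_eq_one.mp h
  have hmem : ∀ i, x i ≠ u i ↔ i ∈ ({j} : Finset (Fin d)) := by
    intro i
    rw [← hj]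
    simp [hammingDist]
  refine ⟨j, (hmem j).mpr (mem_singleton_self j), funext fun i => ?_⟩
  rcases eq_or_ne i j with rfl | h'
  · simp
  · rw [Function.update_of_ne h']
    by_contra hne
    exact h' (mem_singleton.mp ((hmem i).mp hne))

lemma count_up (u : Fin d → Fin 2) :
    (filter (fun x : Fin d → Fin 2 =>
        hammingDist x u = 1 ∧ hammingNorm x = hammingNorm u + 1) univ).card
      = d - hammingNorm u := by
  have hbij : (filter (fun j : Fin d => u j = 0) univ).card
      = (filter (fun x : Fin d → Fin 2 =>
        hammingDist x u = 1 ∧ hammingNorm x = hammingNorm u + 1) univ).card := by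
    apply card_bij (fun j _ => Function.update u j 1)
    · intro j hj
      simp only [mem_filter, mem_univ, true_and] at hj ⊢
      exact ⟨dist_update u j 1 (by simp [hj]), norm_update_one u j hj⟩
    · intro j hj j' hj' h
      simp only [mem_filter, mem_univ, true_and] at hj hj'
      by_contra hne
      have := congrFun h j
      rw [Function.update_self, Function.update_of_ne hne] at this
      exact one_ne_zero (this.trans hj)
    · intro x hx
      simp only [mem_filter, mem_univ, true_and] at hx
      obtain ⟨hd1, hn⟩ := hx
      obtain ⟨j, hne, hx⟩ := exists_update_of_dist_one hd1
      have huj : u j = 0 := by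
        by_contra h0
        have := norm_update_zero u j h0
        have hxj : x j = 0 := by
          by_contra hxj
          exact hne ((fin2_eq_one_of_ne hxj).trans (fin2_eq_one_of_ne h0).symm)
        rw [hxj] at hx
        rw [hx] at hn
        omega
      refine ⟨j, by simp [huj], ?_⟩
      rw [hx, fin2_eq_one_of_ne (fun h => hne (h.trans huj.symm))]
  rw [← hbij]
  have := card_filter_add_card_filter_not (s := (univ : Finset (Fin d)))
    (p := fun j => u j ≠ 0)
  simp only [not_not] at this
  have hcard : (filter (fun j : Fin d => u j ≠ 0) univ).card = hammingNorm u := rfl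
  simp only [card_univ, Fintype.card_fin] at this
  omega

lemma count_down (u : Fin d → Fin 2) :
    (filter (fun x : Fin d → Fin 2 =>
        hammingDist x u = 1 ∧ hammingNorm x + 1 = hammingNorm u) univ).card
      = hammingNorm u := by
  have hbij : (filter (fun j : Fin d => u j ≠ 0) univ).card
      = (filter (fun x : Fin d → Fin 2 =>
        hammingDist x u = 1 ∧ hammingNorm x + 1 = hammingNorm u) univ).card := by
    apply card_bij (fun j _ => Function.update u j 0)
    · intro j hj
      simp only [mem_filter, mem_univ, true_and] at hj ⊢
      exact ⟨dist_update u j 0 (fun h => hj h.symm), norm_update_zero u j hj⟩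
    · intro j hj j' hj' h
      simp only [mem_filter, mem_univ, true_and] at hj hj'
      by_contra hne
      have := congrFun h j
      rw [Function.update_self, Function.update_of_ne hne] at this
      exact hj this.symm
    · intro x hx
      simp only [mem_filter, mem_univ, true_and] at hx
      obtain ⟨hd1, hn⟩ := hx
      obtain ⟨j, hne, hx⟩ := exists_update_of_dist_one hd1
      have huj : u j ≠ 0 := by
        intro h0
        have hxj : x j = 1 := fin2_eq_one_of_ne (fun h => hne (h.trans h0.symm))
        rw [hxj] at hx
        rw [hx, norm_update_one u j h0] at hn
        omega
      have hxj : x j = 0 := by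
        by_contra hxj
        exact hne ((fin2_eq_one_of_ne hxj).trans (fin2_eq_one_of_ne huj).symm)
      exact ⟨j, by simp [huj], by rw [hx, hxj]⟩
  rw [← hbij]
  rfl

lemma count_none (u : Fin d → Fin 2) (i : ℕ) (h1 : hammingNorm u + 1 ≠ i)
    (h2 : i + 1 ≠ hammingNorm u) :
    (filter (fun x : Fin d → Fin 2 =>
        hammingDist x u = 1 ∧ hammingNorm x = i) univ).card = 0 := by
  rw [card_eq_zero, filter_eq_empty_iff]
  rintro x - ⟨hd1, hn⟩
  obtain ⟨j, hne, hx⟩ := exists_update_of_dist_one hd1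
  rcases eq_or_ne (u j) 0 with h0 | h0
  · have hxj : x j = 1 := fin2_eq_one_of_ne (fun h => hne (h.trans h0.symm))
    rw [hxj] at hx
    rw [hx, norm_update_one u j h0] at hn
    omega
  · have hxj : x j = 0 := by
      by_contra hxj
      exact hne ((fin2_eq_one_of_ne hxj).trans (fin2_eq_one_of_ne h0).symm)
    rw [hxj] at hx
    have := norm_update_zero u j h0
    rw [← hx] at this
    omega

lemma count_level (u : Fin d → Fin 2) (i : ℕ) :
    ((filter (fun x : Fin d → Fin 2 =>
        hammingDist x u = 1 ∧ hammingNorm x = i) univ).card : ℝ) =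
      (if hammingNorm u + 1 = i then (d : ℝ) - hammingNorm u else 0) +
      (if i + 1 = hammingNorm u then (i : ℝ) + 1 else 0) := by
  have hle : hammingNorm u ≤ d := by
    simpa using hammingNorm_le_card_fintype (x := u)
  rcases eq_or_ne (hammingNorm u + 1) i with h1 | h1
  · have h2 : i + 1 ≠ hammingNorm u := by omega
    rw [if_pos h1, if_neg h2, add_zero, ← h1, count_up]
    push_cast [Nat.cast_sub hle]
    ring
  · rcases eq_or_ne (i + 1) (hammingNorm u) with h2 | h2
    · rw [if_neg h1, if_pos h2, zero_add]
      have : (filter (fun x : Fin d → Fin 2 =>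
          hammingDist x u = 1 ∧ hammingNorm x = i) univ)
          = (filter (fun x : Fin d → Fin 2 =>
          hammingDist x u = 1 ∧ hammingNorm x + 1 = hammingNorm u) univ) := by
        ext x
        simp only [mem_filter, mem_univ, true_and]
        constructor
        · rintro ⟨ha, hb⟩; exact ⟨ha, by omega⟩
        · rintro ⟨ha, hb⟩; exact ⟨ha, by omega⟩
      rw [this, count_down, ← h2]
      push_cast
      ring
    · rw [if_neg h1, if_neg h2, count_none u i h1 h2]
      norm_num

open Finset Matrix

abbrev BallVertex (d r : ℕ) := {v : Fin d → Fin 2 // hammingNorm v ≤ r}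

lemma level_card {d r : ℕ} (u : BallVertex d r) {i : ℕ} (hi : i ≤ r) :
    (filter (fun v : BallVertex d r =>
        hammingNorm v.1 = i ∧ hammingDist v.1 u.1 = 1) univ).card
      = (filter (fun x : Fin d → Fin 2 =>
        hammingDist x u.1 = 1 ∧ hammingNorm x = i) univ).card := by
  apply card_bij (fun v _ => v.1)
  · intro v hv
    simp only [mem_filter, mem_univ, true_and] at hv ⊢
    exact ⟨hv.2, hv.1⟩
  · intro v _ v' _ h
    exact Subtype.ext h
  · intro x hx
    simp only [mem_filter, mem_univ, true_and] at hx
    exact ⟨⟨x, hx.2 ▸ hi⟩, by simp [hx.1, hx.2]⟩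

lemma balance {d r : ℕ} {w : BallVertex d r → ℝ} {μ : ℝ}
    (heig : (hammingBall d r).adjMatrix ℝ *ᵥ w = μ • w) {i : ℕ} (hi : i ≤ r) :
    μ * (∑ v ∈ filter (fun v : BallVertex d r => hammingNorm v.1 = i) univ, w v) =
      ((d : ℝ) - i + 1) * (∑ u ∈ filter
          (fun u : BallVertex d r => hammingNorm u.1 + 1 = i) univ, w u)
        + ((i : ℝ) + 1) * (∑ u ∈ filter
          (fun u : BallVertex d r => hammingNorm u.1 = i + 1) univ, w u) := by
  classical
  set A := (hammingBall d r).adjMatrix ℝ with hA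
  have step1 : μ * (∑ v ∈ filter (fun v : BallVertex d r => hammingNorm v.1 = i) univ, w v)
      = ∑ v ∈ filter (fun v : BallVertex d r => hammingNorm v.1 = i) univ,
          ∑ u : BallVertex d r, A v u * w u := by
    rw [Finset.mul_sum]
    refine Finset.sum_congr rfl fun v _ => ?_
    have := congrFun heig v
    simp only [Pi.smul_apply, smul_eq_mul] at this
    rw [← this]
    rfl
  have step2 : (∑ v ∈ filter (fun v : BallVertex d r => hammingNorm v.1 = i) univ,
          ∑ u : BallVertex d r, A v u * w u)
      = ∑ u : BallVertex d r,
          (∑ v ∈ filter (fun v : BallVertex d r => hammingNorm v.1 = i) univ, A v u) * w u := by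
    rw [Finset.sum_comm]
    refine Finset.sum_congr rfl fun u _ => ?_
    rw [Finset.sum_mul]
  have inner : ∀ u : BallVertex d r,
      (∑ v ∈ filter (fun v : BallVertex d r => hammingNorm v.1 = i) univ, A v u)
      = ((if hammingNorm u.1 + 1 = i then (d : ℝ) - hammingNorm u.1 else 0) +
         (if i + 1 = hammingNorm u.1 then (i : ℝ) + 1 else 0)) := by
    intro u
    have h1 : (∑ v ∈ filter (fun v : BallVertex d r => hammingNorm v.1 = i) univ, A v u)
        = ((filter (fun v : BallVertex d r => hammingNorm v.1 = i ∧
            hammingDist v.1 u.1 = 1) univ).card : ℝ) := by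
      simp only [hA, SimpleGraph.adjMatrix_apply]
      rw [Finset.sum_boole, ← Finset.filter_filter]
      norm_num
      congr 1
      apply Finset.filter_congr
      intro x _
      exact Iff.rfl
    rw [h1, level_card u hi, count_level]
  rw [step1, step2]
  have split : ∀ u : BallVertex d r,
      ((if hammingNorm u.1 + 1 = i then (d : ℝ) - hammingNorm u.1 else 0) +
       (if i + 1 = hammingNorm u.1 then (i : ℝ) + 1 else 0)) * w u
      = (if hammingNorm u.1 + 1 = i then ((d : ℝ) - i + 1) * w u else 0) +
        (if hammingNorm u.1 = i + 1 then ((i : ℝ) + 1) * w u else 0) := by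
    intro u
    rcases eq_or_ne (hammingNorm u.1 + 1) i with h1 | h1
    · have h2 : i + 1 ≠ hammingNorm u.1 := by omega
      have h3 : hammingNorm u.1 ≠ i + 1 := by omega
      have hc : (hammingNorm u.1 : ℝ) = (i : ℝ) - 1 := by
        have : ((hammingNorm u.1 : ℕ) : ℝ) + 1 = (i : ℝ) := by exact_mod_cast h1
        linarith
      rw [if_pos h1, if_neg h2, if_pos h1, if_neg h3, hc]
      ring
    · rcases eq_or_ne (hammingNorm u.1) (i + 1) with h2 | h2
      · rw [if_neg h1, if_pos (by omega), if_neg h1, if_pos h2]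
        ring
      · rw [if_neg h1, if_neg (by omega), if_neg h1, if_neg h2]
        ring
  calc (∑ u : BallVertex d r,
        (∑ v ∈ filter (fun v : BallVertex d r => hammingNorm v.1 = i) univ, A v u) * w u)
      = ∑ u : BallVertex d r,
          ((if hammingNorm u.1 + 1 = i then ((d : ℝ) - i + 1) * w u else 0) +
          (if hammingNorm u.1 = i + 1 then ((i : ℝ) + 1) * w u else 0)) := by
        refine Finset.sum_congr rfl fun u _ => ?_
        rw [inner u, split u]
    _ = _ := by
        rw [Finset.sum_add_distrib, ← Finset.sum_filter, ← Finset.sum_filter,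
          Finset.mul_sum, Finset.mul_sum]
/-- The principal eigenvalue of the Hamming ball `B_{d,r}` is a root of `p_r`. -/
theorem hammingBall_principal_eigenvalue_isRoot (d r : ℕ) (hd : 1 ≤ d) (hr : r ≤ d) :
    (ballPoly d r).IsRoot (sSup (spectrum ℝ ((hammingBall d r).adjMatrix ℝ))) := by
  classical
  have hne : Nonempty (BallVertex d r) := ⟨⟨fun _ => 0, by simp [hammingNorm]⟩⟩
  set A := (hammingBall d r).adjMatrix ℝ with hA
  have hherm : A.IsHermitian := by
    rw [Matrix.IsHermitian, Matrix.conjTranspose_eq_transpose_of_trivial]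
    exact (SimpleGraph.isSymm_adjMatrix _)
  have h0 : ∀ i j, 0 ≤ A i j := by
    intro i j
    rw [hA, SimpleGraph.adjMatrix_apply]
    split <;> norm_num
  obtain ⟨w, hwne, hwpos, hweig⟩ := exists_nonneg_principal_eigenvector A hherm h0
  set μ := sSup (spectrum ℝ A) with hμ
  set c : ℕ → ℝ := fun k =>
    ∑ v ∈ filter (fun v : BallVertex d r => hammingNorm v.1 = k) univ, w v with hc
  have hctop : ∀ k, r < k → c k = 0 := by
    intro k hk
    refine Finset.sum_eq_zero fun v hv => ?_
    have h1 := (Finset.mem_filter.mp hv).2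
    have h2 := v.2
    exact absurd (h1 ▸ h2) (by omega)
  have hbal0 : μ * c 0 = c 1 := by
    have hb := balance hweig (Nat.zero_le r)
    have hempty : (filter (fun u : BallVertex d r => hammingNorm u.1 + 1 = 0) univ) = ∅ := by
      rw [Finset.filter_eq_empty_iff]
      intro u _
      omega
    rw [hempty, Finset.sum_empty, mul_zero, zero_add, Nat.cast_zero, zero_add, one_mul] at hb
    exact hb
  have hbali : ∀ i, 1 ≤ i → i ≤ r →
      μ * c i = ((d : ℝ) - i + 1) * c (i - 1) + ((i : ℝ) + 1) * c (i + 1) := by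
    intro i h1 h2
    have hb := balance hweig h2
    have hfeq : filter (fun u : BallVertex d r => hammingNorm u.1 + 1 = i) univ
        = filter (fun u : BallVertex d r => hammingNorm u.1 = i - 1) univ := by
      apply Finset.filter_congr
      intro u _
      constructor
      · intro h; omega
      · intro h; omega
    rw [hfeq] at hb
    exact hb
  have key : ∀ j, j ≤ r →
      (ballPoly d j).eval μ * c 0 = ((j + 1).factorial : ℝ) * c (j + 1) := by
    intro j
    induction j using Nat.strong_induction_on with
    | _ j ih =>
      match j with
      | 0 =>
        intro _
        simp only [ballPoly, Polynomial.eval_X, Nat.factorial, Nat.cast_one]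
        rw [hbal0]
        ring
      | 1 =>
        intro h1
        have e1 := hbali 1 le_rfl h1
        norm_num at e1
        simp only [ballPoly, Polynomial.eval_sub, Polynomial.eval_pow, Polynomial.eval_X,
          Polynomial.eval_C]
        have hfac : (((1 : ℕ) + 1).factorial : ℝ) = 2 := by norm_num [Nat.factorial]
        rw [hfac]
        calc (μ ^ 2 - (d : ℝ)) * c 0 = μ * (μ * c 0) - (d : ℝ) * c 0 := by ring
          _ = μ * c 1 - (d : ℝ) * c 0 := by rw [hbal0]
          _ = ((d : ℝ) * c 0 + 2 * c 2) - (d : ℝ) * c 0 := by rw [e1]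
          _ = 2 * c 2 := by ring
      | (m + 2) =>
        intro hm
        have ihm := ih m (by omega) (by omega)
        have ihm1 := ih (m + 1) (by omega) (by omega)
        have e := hbali (m + 2) (by omega) hm
        simp only [ballPoly, Polynomial.eval_sub, Polynomial.eval_mul, Polynomial.eval_X,
          Polynomial.eval_C]
        have hsub : (m + 2 : ℕ) - 1 = m + 1 := by omega
        rw [hsub] at e
        push_cast at e ihm ihm1 ⊢
        have hf1 : ((m + 2).factorial : ℝ) = ((m : ℝ) + 2) * ((m + 1).factorial : ℝ) := by
          rw [show (m + 2) = (m + 1) + 1 from rfl, Nat.factorial_succ]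
          push_cast
          ring
        have hf2 : ((m + 3).factorial : ℝ) = ((m : ℝ) + 3) * ((m + 2).factorial : ℝ) := by
          rw [show (m + 3) = (m + 2) + 1 from rfl, Nat.factorial_succ]
          push_cast
          ring
    -- goal: (μ * eval - ((m+2)*(d-(m+2)+1)) * eval) * c 0 = (m+3)! * c (m+3)
        calc (μ * (ballPoly d (m + 1)).eval μ
              - ((m : ℝ) + 2) * ((d : ℝ) - ((m : ℝ) + 2) + 1) * (ballPoly d m).eval μ) * c 0
            = μ * ((ballPoly d (m + 1)).eval μ * c 0)
              - ((m : ℝ) + 2) * ((d : ℝ) - ((m : ℝ) + 2) + 1) * ((ballPoly d m).eval μ * c 0) := by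
              ring
          _ = μ * (((m + 2).factorial : ℝ) * c (m + 2))
              - ((m : ℝ) + 2) * ((d : ℝ) - ((m : ℝ) + 2) + 1)
                * (((m + 1).factorial : ℝ) * c (m + 1)) := by
              rw [ihm1, ihm]
          _ = ((m + 2).factorial : ℝ)
              * (μ * c (m + 2) - ((d : ℝ) - ((m : ℝ) + 2) + 1) * c (m + 1)) := by
              rw [hf1]
              ring
          _ = ((m + 2).factorial : ℝ) * (((m : ℝ) + 2 + 1) * c (m + 2 + 1)) := by
              rw [e]
              ring_nf
          _ = ((m + 3).factorial : ℝ) * c (m + 3) := by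
              rw [hf2]
              ring_nf
  have final := key r le_rfl
  rw [hctop (r + 1) (by omega), mul_zero] at final
  rcases mul_eq_zero.mp final with h | h
  · exact h
  · exfalso
    have hcall : ∀ k, c k = 0 := by
      intro k
      match k with
      | 0 => exact h
      | (j + 1) =>
        rcases Nat.lt_or_ge r (j + 1) with hk | hk
        · exact hctop (j + 1) hk
        · have hj := key j (by omega)
          rw [h, mul_zero] at hj
          have hfac : (((j + 1).factorial : ℝ)) ≠ 0 := by
            exact_mod_cast Nat.factorial_ne_zero (j + 1)
          exact ((mul_eq_zero.mp hj.symm).resolve_left hfac)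
    apply hwne
    funext v
    have hv : c (hammingNorm v.1) = 0 := hcall (hammingNorm v.1)
    have hnn : ∀ x ∈ filter (fun u : BallVertex d r =>
        hammingNorm u.1 = hammingNorm v.1) univ, 0 ≤ w x := fun x _ => hwpos x
    have := (Finset.sum_eq_zero_iff_of_nonneg hnn).mp hv v (by simp)
    simpa using this
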